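/- Let T be an m × m integer matrix with det T ≠ 0 having an eigenvalue of absolute value ≠ 1. Let G = G(m,T) be the ascending HNN-extension ⟨a₁,…,a_m,t | [aᵢ,aⱼ]=1, t a^u t⁻¹ = a^{Tu}⟩ and X = {a₁,…,a_m,t}. Then there exists α > 1 such that for all sufficiently large n, the elliptic subgroup A(m,T) = ker(τ) satisfies |A(m,T) ∩ B_X(n)| ≥ α^n; i.e., A(m,T) has exponential growth in G(m,T). -/

import Mathlib

noncomputable section

/-- Ball of radius `n` in the word metric with respect to a generating set `Y`. -/
def wordBall {G : Type*} [Group G] (Y : Set G) (n : ℕ) : Set G :=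
  {g | ∃ l : List G, (∀ x ∈ l, x ∈ Y ∨ x⁻¹ ∈ Y) ∧ l.length ≤ n ∧ l.prod = g}

/-- Relations of the ascending HNN-extension `G(m,T)`. -/
def gmtRels (m : ℕ) (T : Matrix (Fin m) (Fin m) ℤ) : Set (FreeGroup (Fin m ⊕ Unit)) :=
  {r | (∃ i j : Fin m,
          r = FreeGroup.of (Sum.inl i) * FreeGroup.of (Sum.inl j) *
              (FreeGroup.of (Sum.inl i))⁻¹ * (FreeGroup.of (Sum.inl j))⁻¹) ∨
       (∃ i : Fin m,
          r = FreeGroup.of (Sum.inr ()) * FreeGroup.of (Sum.inl i) *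
              (FreeGroup.of (Sum.inr ()))⁻¹ *
              ((List.ofFn fun j : Fin m => FreeGroup.of (Sum.inl j) ^ (T j i)).prod)⁻¹)}

/-- The ascending HNN-extension `G(m,T)` of `ℤ^m` determined by `T`. -/
abbrev GmT (m : ℕ) (T : Matrix (Fin m) (Fin m) ℤ) : Type := PresentedGroup (gmtRels m T)

def gmtA (m : ℕ) (T : Matrix (Fin m) (Fin m) ℤ) (i : Fin m) : GmT m T :=
  PresentedGroup.of (Sum.inl i)

def gmtT (m : ℕ) (T : Matrix (Fin m) (Fin m) ℤ) : GmT m T :=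
  PresentedGroup.of (Sum.inr ())

/-- `a^u = a₁^{u₁} ⋯ a_m^{u_m}`. -/
def gmtAProd (m : ℕ) (T : Matrix (Fin m) (Fin m) ℤ) (u : Fin m → ℤ) : GmT m T :=
  (List.ofFn fun i => gmtA m T i ^ (u i)).prod

lemma gmtTauAux (m : ℕ) (T : Matrix (Fin m) (Fin m) ℤ) :
    ∀ r ∈ gmtRels m T,
      (FreeGroup.lift (Sum.elim (fun _ : Fin m => (1 : Multiplicative ℤ))
        (fun _ : Unit => Multiplicative.ofAdd 1))) r = 1 := by
  rintro r (⟨i, j, rfl⟩ | ⟨i, rfl⟩) <;>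
    simp [map_mul, map_inv, map_list_prod, List.map_ofFn, Function.comp, map_zpow,
      List.prod_ofFn]

/-- The `t`-exponent homomorphism `τ`. -/
def gmtTau (m : ℕ) (T : Matrix (Fin m) (Fin m) ℤ) : GmT m T →* Multiplicative ℤ :=
  PresentedGroup.toGroup (gmtTauAux m T)

/-- The elliptic subgroup `A(m,T) = ker τ`. -/
def gmtElliptic (m : ℕ) (T : Matrix (Fin m) (Fin m) ℤ) : Subgroup (GmT m T) :=
  (gmtTau m T).ker

open Matrix

lemma wordBall_finite {G : Type*} [Group G] {Y : Set G} (hY : Y.Finite) (n : ℕ) :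
    (wordBall Y n).Finite := by
  induction n with
  | zero =>
    refine Set.Finite.subset (Set.finite_singleton 1) ?_
    rintro g ⟨l, -, hlen, rfl⟩
    have : l = [] := List.length_eq_zero_iff.mp (Nat.le_zero.mp hlen)
    simp [this]
  | succ n ih =>
    refine Set.Finite.subset (ih.union (((hY.union hY.inv).mul ih))) ?_
    rintro g ⟨l, hmem, hlen, rfl⟩
    cases l with
    | nil => exact Or.inl ⟨[], by simp, by simp, rfl⟩
    | cons x l' =>
      right
      rw [List.prod_cons]
      refine Set.mul_mem_mul ?_ ⟨l', fun y hy => hmem y (List.mem_cons_of_mem _ hy),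
        Nat.succ_le_succ_iff.mp (by simpa using hlen), rfl⟩
      rcases hmem x List.mem_cons_self with h | h
      · exact Or.inl h
      · exact Or.inr (Set.mem_inv.mpr (by simpa using h))

lemma wordBall_mono {G : Type*} [Group G] {Y : Set G} {n n' : ℕ} (h : n ≤ n') :
    wordBall Y n ⊆ wordBall Y n' := by
  rintro g ⟨l, hm, hl, rfl⟩
  exact ⟨l, hm, hl.trans h, rfl⟩

lemma charpoly_eval {n : Type*} [Fintype n] [DecidableEq n] {R : Type*} [CommRing R]
    (M : Matrix n n R) (t : R) :
    M.charpoly.eval t = (t • (1 : Matrix n n R) - M).det := by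
  rw [Matrix.charpoly, eval_det, Matrix.matPolyEquiv_charmatrix]
  congr 1
  ext i k
  by_cases h : i = k <;> simp [Matrix.diagonal, Matrix.one_apply, h]

lemma multiset_prod_le_one {s : Multiset ℝ} (h : ∀ x ∈ s, 0 ≤ x ∧ x ≤ 1) : s.prod ≤ 1 := by
  induction s using Multiset.induction with
  | empty => simp
  | cons a s ih =>
    rw [Multiset.prod_cons]
    have ha := h a (Multiset.mem_cons_self a s)
    have hs : ∀ x ∈ s, 0 ≤ x ∧ x ≤ 1 := fun x hx => h x (Multiset.mem_cons_of_mem hx)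
    have hnn : (0:ℝ) ≤ s.prod := Multiset.prod_nonneg (fun x hx => (hs x hx).1)
    calc a * s.prod ≤ 1 * 1 := by
          apply mul_le_mul ha.2 (ih hs) hnn zero_le_one
      _ = 1 := by ring

/-- From a root of the charpoly of absolute value ≠ 1 and `det ≠ 0`, get a root of
absolute value `> 1`. -/
lemma exists_big_root (m : ℕ) (T : Matrix (Fin m) (Fin m) ℤ) (hdet : T.det ≠ 0)
    (hev : ∃ z ∈ (Matrix.charpoly (T.map (Int.cast : ℤ → ℂ))).roots, ‖z‖ ≠ 1) :
    ∃ z ∈ (Matrix.charpoly (T.map (Int.cast : ℤ → ℂ))).roots, 1 < ‖z‖ := by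
  obtain ⟨z, hz, hz1⟩ := hev
  rcases lt_or_gt_of_ne hz1 with hlt | hgt
  swap
  · exact ⟨z, hz, hgt⟩
  by_contra hall
  push_neg at hall
  set M := T.map (Int.cast : ℤ → ℂ) with hM
  have hdetM : M.det = ((T.det : ℤ) : ℂ) := (RingHom.map_det (Int.castRingHom ℂ) T).symm
  have hprod : M.det = M.charpoly.roots.prod := Matrix.det_eq_prod_roots_charpoly M
  -- compute absolute values
  have habs : ‖M.det‖ = ((M.charpoly.roots.map (fun x => ‖x‖)).prod) := by
    rw [hprod]
    exact map_multiset_prod (normHom : ℂ →*₀ ℝ) _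
  have hge1 : (1:ℝ) ≤ ‖M.det‖ := by
    rw [hdetM]
    rw [Complex.norm_intCast]
    exact_mod_cast Int.one_le_abs (by exact_mod_cast hdet)
  -- roots = z ::ₘ rest
  have hcons := Multiset.cons_erase hz
  have hlt1 : ‖M.det‖ < 1 := by
    rw [habs, ← hcons, Multiset.map_cons, Multiset.prod_cons]
    have hrest : ((M.charpoly.roots.erase z).map (fun x => ‖x‖)).prod ≤ 1 := by
      apply multiset_prod_le_one
      intro x hx
      obtain ⟨y, hy, rfl⟩ := Multiset.mem_map.mp hx
      exact ⟨norm_nonneg y, hall y (Multiset.mem_of_mem_erase hy)⟩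
    have hnn : (0:ℝ) ≤ ((M.charpoly.roots.erase z).map (fun x => ‖x‖)).prod :=
      Multiset.prod_nonneg (by
        intro x hx
        obtain ⟨y, hy, rfl⟩ := Multiset.mem_map.mp hx
        exact norm_nonneg y)
    calc ‖z‖ * ((M.charpoly.roots.erase z).map (fun x => ‖x‖)).prod
        ≤ ‖z‖ * 1 := by
          exact mul_le_mul_of_nonneg_left hrest (norm_nonneg z)
      _ = ‖z‖ := mul_one _
      _ < 1 := hlt
  linarith

/-- eigenvector of the transpose -/
lemma exists_left_eigenvector (m : ℕ) (M : Matrix (Fin m) (Fin m) ℂ) (lam : ℂ)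
    (hz : lam ∈ M.charpoly.roots) :
    ∃ w : Fin m → ℂ, w ≠ 0 ∧ Mᵀ *ᵥ w = lam • w := by
  have hroot : M.charpoly.IsRoot lam := (Polynomial.mem_roots (M.charpoly_monic.ne_zero)).mp hz
  have hdet : (lam • (1 : Matrix (Fin m) (Fin m) ℂ) - M).det = 0 := by
    rw [← charpoly_eval]; exact hroot
  have hdetT : (lam • (1 : Matrix (Fin m) (Fin m) ℂ) - Mᵀ).det = 0 := by
    have : (lam • (1 : Matrix (Fin m) (Fin m) ℂ) - M)ᵀ
        = lam • (1 : Matrix (Fin m) (Fin m) ℂ) - Mᵀ := by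
      rw [Matrix.transpose_sub, Matrix.transpose_smul, Matrix.transpose_one]
    rw [← this, Matrix.det_transpose]
    exact hdet
  obtain ⟨w, hw0, hw⟩ := (Matrix.exists_mulVec_eq_zero_iff).mpr hdetT
  refine ⟨w, hw0, ?_⟩
  have := hw
  rw [Matrix.sub_mulVec, sub_eq_zero, Matrix.smul_mulVec, Matrix.one_mulVec] at this
  exact this.symm

def digitSum (c mu : ℂ) : List Bool → ℂ
  | [] => 0
  | b :: r => (if b then c else 0) + mu * digitSum c mu r

lemma digitSum_sep (c mu : ℂ) (hmu : 2 ≤ ‖mu‖) :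
    ∀ bs cs : List Bool, bs.length = cs.length → bs ≠ cs →
      ‖c‖ ≤ ‖digitSum c mu bs - digitSum c mu cs‖ := by
  intro bs
  induction bs with
  | nil =>
    intro cs hlen hne
    cases cs with
    | nil => exact absurd rfl hne
    | cons c' cs' => simp at hlen
  | cons b r ih =>
    intro cs hlen hne
    cases cs with
    | nil => simp at hlen
    | cons b' r' =>
      have hlen' : r.length = r'.length := by simpa using hlen
      have hdiff : digitSum c mu (b :: r) - digitSum c mu (b' :: r')
          = ((if b then c else 0) - (if b' then c else 0))
            + mu * (digitSum c mu r - digitSum c mu r') := by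
        simp [digitSum]; ring
      by_cases hr : r = r'
      · subst hr
        have hb : b ≠ b' := by
          intro h; exact hne (by rw [h])
        rw [hdiff, sub_self, mul_zero, add_zero]
        cases b <;> cases b' <;> simp_all
      · have hIH := ih r' hlen' hr
        set bd : ℂ := (if b then c else 0) - (if b' then c else 0) with hbd
        set d : ℂ := digitSum c mu r - digitSum c mu r' with hd
        have hbd_le : ‖bd‖ ≤ ‖c‖ := by
          cases b <;> cases b' <;> simp [hbd] <;> simp [norm_nonneg]
        have htri : ‖mu * d‖ ≤ ‖bd + mu * d‖ + ‖bd‖ := by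
          calc ‖mu * d‖ = ‖(bd + mu * d) + (-bd)‖ := by ring_nf
            _ ≤ ‖bd + mu * d‖ + ‖-bd‖ := norm_add_le _ _
            _ = ‖bd + mu * d‖ + ‖bd‖ := by rw [norm_neg]
        have hmud : 2 * ‖c‖ ≤ ‖mu * d‖ := by
          rw [norm_mul]
          calc 2 * ‖c‖ ≤ ‖mu‖ * ‖d‖ := by
                apply mul_le_mul hmu hIH (norm_nonneg c)
                  (le_trans zero_le_two hmu)
            _ = _ := rfl
        rw [hdiff]
        linarith
namespace Stmt8Aux

variable {m : ℕ} (T : Matrix (Fin m) (Fin m) ℤ)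

/-- translation permutation -/
def tr (w : Fin m → ℂ) : Equiv.Perm (Fin m → ℂ) where
  toFun x := w + x
  invFun x := -w + x
  left_inv x := by simp
  right_inv x := by simp

lemma tr_apply (w x : Fin m → ℂ) : tr w x = w + x := rfl

lemma tr_mul (w₁ w₂ : Fin m → ℂ) : tr w₁ * tr w₂ = tr (w₁ + w₂) := by
  ext x
  simp [Equiv.Perm.mul_apply, tr_apply, add_assoc]

lemma tr_zero : tr (0 : Fin m → ℂ) = 1 := by
  ext x
  simp [tr_apply]

lemma tr_injective : Function.Injective (tr (m := m)) := by
  intro w w' h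
  have := congrArg (fun e : Equiv.Perm (Fin m → ℂ) => e 0) h
  simpa [tr_apply] using this

/-- `tr` as a monoid hom from the multiplicative vector group. -/
def trHom : Multiplicative (Fin m → ℂ) →* Equiv.Perm (Fin m → ℂ) :=
  MonoidHom.mk' (fun w => tr (Multiplicative.toAdd w)) (fun a b => (tr_mul _ _).symm)

lemma tr_zpow (w : Fin m → ℂ) (n : ℤ) : tr w ^ n = tr (n • w) := by
  have : tr w = trHom (Multiplicative.ofAdd w) := rfl
  rw [this, ← map_zpow]
  rfl

lemma tr_pow (w : Fin m → ℂ) (n : ℕ) : tr w ^ n = tr (n • w) := by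
  have := tr_zpow (m := m) w n
  simpa using this

def Tc : Matrix (Fin m) (Fin m) ℂ := T.map (Int.cast : ℤ → ℂ)

lemma det_Tc_ne (hdet : T.det ≠ 0) : (Tc T).det ≠ 0 := by
  have h : (Tc T).det = ((T.det : ℤ) : ℂ) := ((RingHom.map_det (Int.castRingHom ℂ) T)).symm
  rw [h]
  exact_mod_cast hdet

def permT (hdet : T.det ≠ 0) : Equiv.Perm (Fin m → ℂ) where
  toFun := (Tc T).mulVec
  invFun := (Tc T)⁻¹.mulVec
  left_inv v := by
    rw [Matrix.mulVec_mulVec, Matrix.nonsing_inv_mul _ (isUnit_iff_ne_zero.mpr (det_Tc_ne T hdet)),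
      Matrix.one_mulVec]
  right_inv v := by
    rw [Matrix.mulVec_mulVec, Matrix.mul_nonsing_inv _ (isUnit_iff_ne_zero.mpr (det_Tc_ne T hdet)),
      Matrix.one_mulVec]

lemma permT_apply (hdet : T.det ≠ 0) (x : Fin m → ℂ) : permT T hdet x = (Tc T) *ᵥ x := rfl

lemma permT_conj (hdet : T.det ≠ 0) (w : Fin m → ℂ) :
    permT T hdet * tr w * (permT T hdet)⁻¹ = tr ((Tc T) *ᵥ w) := by
  ext x
  have hinv : (permT T hdet)⁻¹ x = (Tc T)⁻¹ *ᵥ x := rfl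
  simp only [Equiv.Perm.mul_apply, hinv, tr_apply, permT_apply, Matrix.mulVec_add]
  congr 1
  rw [Matrix.mulVec_mulVec, Matrix.mul_nonsing_inv _ (isUnit_iff_ne_zero.mpr (det_Tc_ne T hdet)),
    Matrix.one_mulVec]

lemma permT_pow_conj (hdet : T.det ≠ 0) (s : ℕ) (w : Fin m → ℂ) :
    (permT T hdet) ^ s * tr w * ((permT T hdet) ^ s)⁻¹ = tr ((Tc T ^ s) *ᵥ w) := by
  induction s with
  | zero => simp [Matrix.one_mulVec]
  | succ s ih =>
    rw [pow_succ']
    have : permT T hdet * permT T hdet ^ s * tr w * (permT T hdet * permT T hdet ^ s)⁻¹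
        = permT T hdet * (permT T hdet ^ s * tr w * (permT T hdet ^ s)⁻¹) * (permT T hdet)⁻¹ := by
      group
    rw [this, ih, permT_conj, Matrix.mulVec_mulVec, ← pow_succ']

/-- the generators' images -/
def fgen (hdet : T.det ≠ 0) : (Fin m) ⊕ Unit → Equiv.Perm (Fin m → ℂ) :=
  Sum.elim (fun i => tr (Pi.single i 1)) (fun _ => permT T hdet)

@[simp] lemma fgen_inl (hdet : T.det ≠ 0) (i : Fin m) :
    fgen T hdet (Sum.inl i) = tr (Pi.single i 1) := rfl

@[simp] lemma fgen_inr (hdet : T.det ≠ 0) :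
    fgen T hdet (Sum.inr ()) = permT T hdet := rfl

lemma relsAux (hdet : T.det ≠ 0) :
    ∀ r ∈ gmtRels m T, FreeGroup.lift (fgen T hdet) r = 1 := by
  rintro r (⟨i, j, rfl⟩ | ⟨i, rfl⟩)
  · simp only [_root_.map_mul, map_inv, FreeGroup.lift_apply_of, fgen_inl]
    have hcomm : tr (Pi.single i (1:ℂ)) * tr (Pi.single j (1:ℂ))
        = tr (Pi.single j (1:ℂ)) * tr (Pi.single i (1:ℂ)) := by
      rw [tr_mul, tr_mul, add_comm]
    rw [hcomm]
    group
  · simp only [_root_.map_mul, map_inv, FreeGroup.lift_apply_of, fgen_inl, fgen_inr,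
      map_list_prod, List.map_ofFn]
    have hprod : (List.ofFn ((FreeGroup.lift (fgen T hdet)) ∘
          fun j => FreeGroup.of (Sum.inl j) ^ T j i)).prod
        = tr ((Tc T) *ᵥ Pi.single i 1) := by
      have hfn : ((FreeGroup.lift (fgen T hdet)) ∘ fun j => FreeGroup.of (Sum.inl j) ^ T j i)
          = fun j => tr ((T j i : ℂ) • (Pi.single j 1 : Fin m → ℂ)) := by
        funext j
        simp only [Function.comp_apply, map_zpow, FreeGroup.lift_apply_of, fgen_inl]
        rw [tr_zpow]
        congr 1
        exact (Int.cast_smul_eq_zsmul ℂ (T j i) _).symm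
      rw [hfn]
      have : (List.ofFn fun j => tr ((T j i : ℂ) • (Pi.single j 1 : Fin m → ℂ)))
          = List.map tr (List.ofFn fun j => ((T j i : ℂ) • (Pi.single j 1 : Fin m → ℂ))) := by
        rw [List.map_ofFn]
        rfl
      rw [this]
      have hsum : ∀ l : List (Fin m → ℂ), (List.map tr l).prod = tr l.sum := by
        intro l
        induction l with
        | nil => simp [tr_zero]
        | cons a l ih => simp [List.prod_cons, List.sum_cons, ih, tr_mul]
      rw [hsum, List.sum_ofFn]
      congr 1
      funext l
      simp only [Finset.sum_apply, Pi.smul_apply, smul_eq_mul]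
      rw [Matrix.mulVec_single]
      simp only [Pi.smul_apply, Matrix.col_apply, op_smul_eq_mul, mul_one]
      rw [Finset.sum_eq_single l]
      · simp [Tc, Matrix.map_apply]
      · intro b _ hbne
        simp [Pi.single_apply, Ne.symm hbne]
      · intro h; exact absurd (Finset.mem_univ l) h
    rw [hprod, permT_conj]
    group

def homG (hdet : T.det ≠ 0) : GmT m T →* Equiv.Perm (Fin m → ℂ) :=
  PresentedGroup.toGroup (relsAux T hdet)

@[simp] lemma homG_a (hdet : T.det ≠ 0) (i : Fin m) :
    homG T hdet (gmtA m T i) = tr (Pi.single i 1) :=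
  PresentedGroup.toGroup.of (relsAux T hdet)

@[simp] lemma homG_t (hdet : T.det ≠ 0) :
    homG T hdet (gmtT m T) = permT T hdet :=
  PresentedGroup.toGroup.of (relsAux T hdet)

section Words

variable (j : Fin m) (s : ℕ)

def wlist : List Bool → List (GmT m T)
  | [] => []
  | b :: r => (if b then [gmtA m T j] else []) ++ List.replicate s (gmtT m T) ++ wlist r

def gElem (bs : List Bool) : GmT m T :=
  (wlist T j s bs).prod * ((gmtT m T)⁻¹) ^ (s * bs.length)

lemma gElem_nil : gElem T j s [] = 1 := by
  simp [gElem, wlist]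

lemma gElem_cons (b : Bool) (r : List Bool) :
    gElem T j s (b :: r)
      = (if b then gmtA m T j else 1) * (gmtT m T) ^ s * gElem T j s r * ((gmtT m T)⁻¹) ^ s := by
  have hw : wlist T j s (b :: r)
      = (if b then [gmtA m T j] else []) ++ List.replicate s (gmtT m T) ++ wlist T j s r := rfl
  unfold gElem
  rw [hw, List.prod_append, List.prod_append, List.prod_replicate, List.length_cons,
    Nat.mul_succ, pow_add]
  cases b <;> simp [mul_assoc]

def vvec : List Bool → (Fin m → ℂ)
  | [] => 0
  | b :: r => (if b then (Pi.single j 1 : Fin m → ℂ) else 0) + (Tc T ^ s) *ᵥ vvec r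

lemma homG_gElem (hdet : T.det ≠ 0) (bs : List Bool) :
    homG T hdet (gElem T j s bs) = tr (vvec T j s bs) := by
  induction bs with
  | nil => rw [gElem_nil, vvec, _root_.map_one, tr_zero]
  | cons b r ih =>
    rw [gElem_cons, _root_.map_mul, _root_.map_mul, _root_.map_mul, map_pow, map_pow,
      map_inv, homG_t, ih]
    have h1 : ((permT T hdet)⁻¹) ^ s = ((permT T hdet) ^ s)⁻¹ := (inv_pow _ _).symm
    rw [h1]
    have h2 : homG T hdet (if b then gmtA m T j else 1)
        = tr (if b then (Pi.single j 1 : Fin m → ℂ) else 0) := by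
      cases b <;> simp [tr_zero]
    rw [h2]
    have h3 : tr (if b then (Pi.single j 1 : Fin m → ℂ) else 0) * (permT T hdet) ^ s *
          tr (vvec T j s r) * ((permT T hdet) ^ s)⁻¹
        = tr (if b then (Pi.single j 1 : Fin m → ℂ) else 0) *
          ((permT T hdet) ^ s * tr (vvec T j s r) * ((permT T hdet) ^ s)⁻¹) := by
      group
    rw [h3, permT_pow_conj, tr_mul]
    rfl

end Words

end Stmt8Aux

namespace Stmt8Aux

open Matrix

variable {m : ℕ} (T : Matrix (Fin m) (Fin m) ℤ) (j : Fin m) (s : ℕ)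

@[simp] lemma tau_a (i : Fin m) : gmtTau m T (gmtA m T i) = 1 :=
  PresentedGroup.toGroup.of (gmtTauAux m T)

@[simp] lemma tau_t : gmtTau m T (gmtT m T) = Multiplicative.ofAdd 1 :=
  PresentedGroup.toGroup.of (gmtTauAux m T)

lemma tau_gElem (bs : List Bool) : gmtTau m T (gElem T j s bs) = 1 := by
  induction bs with
  | nil => rw [gElem_nil, _root_.map_one]
  | cons b r ih =>
    rw [gElem_cons, _root_.map_mul, _root_.map_mul, _root_.map_mul, map_pow, map_pow, map_inv,
      tau_t, ih]
    have hb : gmtTau m T (if b then gmtA m T j else 1) = 1 := by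
      cases b <;> simp
    rw [hb]
    group

/-- the generator list realizing `gElem` -/
def glist (bs : List Bool) : List (GmT m T) :=
  wlist T j s bs ++ List.replicate (s * bs.length) (gmtT m T)⁻¹

lemma glist_prod (bs : List Bool) : (glist T j s bs).prod = gElem T j s bs := by
  rw [glist, List.prod_append, List.prod_replicate, gElem]

lemma wlist_length (bs : List Bool) : (wlist T j s bs).length ≤ (s + 1) * bs.length := by
  induction bs with
  | nil => simp [wlist]
  | cons b r ih =>
    have hw : wlist T j s (b :: r)
        = (if b then [gmtA m T j] else []) ++ List.replicate s (gmtT m T) ++ wlist T j s r := rfl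
    rw [hw]
    simp only [List.length_append, List.length_replicate, List.length_cons]
    have hb : (if b then [gmtA m T j] else []).length ≤ 1 := by cases b <;> simp
    calc (if b then [gmtA m T j] else []).length + s + (wlist T j s r).length
        ≤ 1 + s + (s + 1) * r.length := by omega
      _ ≤ (s + 1) * (r.length + 1) := by ring_nf; omega

lemma glist_mem (bs : List Bool) :
    ∀ x ∈ glist T j s bs,
      x ∈ (Set.range (gmtA m T) ∪ {gmtT m T}) ∨ x⁻¹ ∈ (Set.range (gmtA m T) ∪ {gmtT m T}) := by
  intro x hx
  rw [glist, List.mem_append] at hx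
  rcases hx with hx | hx
  · -- in wlist
    left
    induction bs with
    | nil => simp [wlist] at hx
    | cons b r ih =>
      have hw : wlist T j s (b :: r)
          = (if b then [gmtA m T j] else []) ++ List.replicate s (gmtT m T) ++ wlist T j s r := rfl
      rw [hw, List.mem_append, List.mem_append] at hx
      rcases hx with (hx | hx) | hx
      · cases b with
        | false => simp at hx
        | true =>
          simp at hx
          subst hx
          exact Or.inl ⟨j, rfl⟩
      · rw [List.eq_of_mem_replicate hx]
        exact Or.inr rfl
      · exact ih hx
  · right
    rw [List.eq_of_mem_replicate hx, inv_inv]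
    exact Or.inr rfl

lemma gElem_mem_ball (bs : List Bool) :
    gElem T j s bs ∈ wordBall (Set.range (gmtA m T) ∪ {gmtT m T}) ((2 * s + 1) * bs.length) := by
  refine ⟨glist T j s bs, glist_mem T j s bs, ?_, glist_prod T j s bs⟩
  rw [glist, List.length_append, List.length_replicate]
  have := wlist_length T j s bs
  nlinarith [bs.length.zero_le]

lemma dot_vvec (w : Fin m → ℂ) (lam : ℂ) (hw : (Tc T)ᵀ *ᵥ w = lam • w) (bs : List Bool) :
    w ⬝ᵥ vvec T j s bs = digitSum (w j) (lam ^ s) bs := by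
  have hdot : ∀ v : Fin m → ℂ, w ⬝ᵥ ((Tc T) *ᵥ v) = lam * (w ⬝ᵥ v) := by
    intro v
    rw [Matrix.dotProduct_mulVec, ← Matrix.mulVec_transpose, hw]
    exact smul_dotProduct lam w v
  have hpow : ∀ (k : ℕ) (v : Fin m → ℂ), w ⬝ᵥ ((Tc T ^ k) *ᵥ v) = lam ^ k * (w ⬝ᵥ v) := by
    intro k
    induction k with
    | zero => intro v; simp [Matrix.one_mulVec]
    | succ k ih =>
      intro v
      rw [pow_succ, ← Matrix.mulVec_mulVec, ih, hdot, pow_succ]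
      ring
  induction bs with
  | nil => simp [vvec, digitSum]
  | cons b r ih =>
    have hv : vvec T j s (b :: r)
        = (if b then (Pi.single j 1 : Fin m → ℂ) else 0) + (Tc T ^ s) *ᵥ vvec T j s r := rfl
    rw [hv, dotProduct_add, hpow, ih, digitSum]
    congr 1
    cases b <;> simp [dotProduct_single]

/-- Main injectivity: `gElem` is injective on lists of a fixed length. -/
lemma gElem_inj (hdet : T.det ≠ 0) (w : Fin m → ℂ) (lam : ℂ)
    (hw : (Tc T)ᵀ *ᵥ w = lam • w) (hwj : w j ≠ 0) (hlam : 2 ≤ ‖lam ^ s‖)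
    (bs cs : List Bool) (hlen : bs.length = cs.length)
    (h : gElem T j s bs = gElem T j s cs) : bs = cs := by
  by_contra hne
  have h1 : tr (vvec T j s bs) = tr (vvec T j s cs) := by
    rw [← homG_gElem T j s hdet, ← homG_gElem T j s hdet, h]
  have h2 : vvec T j s bs = vvec T j s cs := tr_injective h1
  have h3 : digitSum (w j) (lam ^ s) bs = digitSum (w j) (lam ^ s) cs := by
    rw [← dot_vvec T j s w lam hw, ← dot_vvec T j s w lam hw, h2]
  have h4 := digitSum_sep (w j) (lam ^ s) hlam bs cs hlen hne
  rw [h3, sub_self] at h4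
  simp only [norm_zero] at h4
  exact hwj (norm_eq_zero.mp (le_antisymm h4 (norm_nonneg _)))

end Stmt8Aux

/-- If `T` has an eigenvalue of absolute value `≠ 1` (and `det T ≠ 0`), then the elliptic
subgroup `A(m,T) = ker τ` has exponential growth in `G(m,T)` with respect to the standard
generating set `X = {a₁,…,a_m,t}`: there is `α > 1` with `|A ∩ B_X(n)| ≥ αⁿ` for all
sufficiently large `n`. -/
theorem stmt8 (m : ℕ) (T : Matrix (Fin m) (Fin m) ℤ) (hdet : T.det ≠ 0)
    (hev : ∃ z ∈ (Matrix.charpoly (T.map (Int.cast : ℤ → ℂ))).roots, ‖z‖ ≠ 1) :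
    ∃ α : ℝ, 1 < α ∧ ∃ N : ℕ, ∀ n ≥ N,
      α ^ n ≤ ((((gmtElliptic m T : Set (GmT m T)) ∩
        wordBall (Set.range (gmtA m T) ∪ {gmtT m T}) n)).ncard : ℝ) := by
  classical
  obtain ⟨lam, hlam_mem, hlam⟩ := exists_big_root m T hdet hev
  obtain ⟨w, hw0, hw⟩ := exists_left_eigenvector m (T.map (Int.cast : ℤ → ℂ)) lam hlam_mem
  obtain ⟨j, hwj⟩ : ∃ j, w j ≠ 0 := Function.ne_iff.mp hw0
  obtain ⟨s, hs⟩ : ∃ s : ℕ, 2 < ‖lam‖ ^ s := pow_unbounded_of_one_lt 2 hlam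
  have hmu : 2 ≤ ‖lam ^ s‖ := by rw [norm_pow]; linarith
  set K : ℕ := 2 * s + 1 with hK
  have hK0 : 0 < K := by omega
  have hKR : (0:ℝ) < 2 * (K:ℝ) := by positivity
  refine ⟨(2 : ℝ) ^ ((1 : ℝ) / (2 * (K:ℝ))), ?_, 2 * K, ?_⟩
  · rw [Real.one_lt_rpow_iff_of_pos (by norm_num)]
    left
    constructor
    · norm_num
    · positivity
  intro n hn
  set k : ℕ := n / K with hkdef
  have hKk : K * k ≤ n := by
    rw [mul_comm]
    exact Nat.div_mul_le_self n K
  have hk1 : 1 ≤ k := by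
    have h2 : 2 * K / K ≤ n / K := Nat.div_le_div_right hn
    rw [Nat.mul_div_cancel 2 hK0] at h2
    omega
  have hn2 : n < 2 * (K * k) := by
    have hmod : K * k + n % K = n := by rw [hkdef]; exact Nat.div_add_mod n K
    have hmodlt : n % K < K := Nat.mod_lt n hK0
    have hKk' : K ≤ K * k := Nat.le_mul_of_pos_right K hk1
    omega
  -- the injective family
  set Φ : (Fin k → Bool) → GmT m T := fun ε => Stmt8Aux.gElem T j s (List.ofFn ε) with hPhi
  have hinj : Function.Injective Φ := by
    intro ε ε' h
    have := Stmt8Aux.gElem_inj T j s hdet w lam hw hwj hmu (List.ofFn ε) (List.ofFn ε')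
      (by simp) h
    exact List.ofFn_injective this
  have hYfin : ((Set.range (gmtA m T)) ∪ {gmtT m T}).Finite :=
    (Set.finite_range _).union (Set.finite_singleton _)
  have hsub : Set.range Φ ⊆ ((gmtElliptic m T : Set (GmT m T)) ∩
      wordBall (Set.range (gmtA m T) ∪ {gmtT m T}) n) := by
    rintro x ⟨ε, rfl⟩
    constructor
    · have := Stmt8Aux.tau_gElem T j s (List.ofFn ε)
      exact this
    · have hball := Stmt8Aux.gElem_mem_ball T j s (List.ofFn ε)
      rw [List.length_ofFn] at hball
      exact wordBall_mono (by rw [← hK]; exact hKk) hball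
  have hfin : (((gmtElliptic m T : Set (GmT m T)) ∩
      wordBall (Set.range (gmtA m T) ∪ {gmtT m T}) n)).Finite :=
    Set.Finite.subset (wordBall_finite hYfin n) Set.inter_subset_right
  have hcard : (2:ℕ)^k ≤ (((gmtElliptic m T : Set (GmT m T)) ∩
      wordBall (Set.range (gmtA m T) ∪ {gmtT m T}) n)).ncard := by
    have h1 : (Set.range Φ).ncard = 2^k := by
      rw [← Set.image_univ, Set.ncard_image_of_injective _ hinj, Set.ncard_univ]
      simp [Nat.card_eq_fintype_card]
    rw [← h1]
    exact Set.ncard_le_ncard hsub hfin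
  -- real arithmetic
  have hexp : ((2 : ℝ) ^ ((1 : ℝ) / (2 * (K:ℝ)))) ^ n = (2:ℝ) ^ ((n:ℝ) / (2 * (K:ℝ))) := by
    rw [← Real.rpow_natCast ((2:ℝ) ^ ((1 : ℝ) / (2 * (K:ℝ)))) n, ← Real.rpow_mul (by norm_num)]
    ring_nf
  have hle1 : (n:ℝ) / (2 * (K:ℝ)) ≤ (k:ℝ) := by
    rw [div_le_iff₀ hKR]
    have h2 : ((n:ℕ):ℝ) ≤ ((2 * (K * k) : ℕ) : ℝ) := by exact_mod_cast le_of_lt hn2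
    push_cast [hK] at h2 ⊢
    ring_nf at h2 ⊢
    linarith
  calc ((2 : ℝ) ^ ((1 : ℝ) / (2 * (K:ℝ)))) ^ n
      = (2:ℝ) ^ ((n:ℝ) / (2 * (K:ℝ))) := hexp
    _ ≤ (2:ℝ) ^ ((k:ℝ)) := Real.rpow_le_rpow_of_exponent_le one_le_two hle1
    _ = ((2^k : ℕ) : ℝ) := by
        rw [Real.rpow_natCast]
        push_cast
        ring
    _ ≤ _ := by exact_mod_cast hcard
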